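/- Let π be a projective plane of order q with a distinguished line ℓ∞, let A ⊆ ℓ∞ with |A| < √q + 1, and let S be a set of q points of π not on ℓ∞ such that the line joining any two distinct points of S meets ℓ∞ in a point of A. Then S is contained in a line of π. -/

import Mathlib

open Configuration

/-- In a projective plane of order `q` with a distinguished line `ℓ∞`, if `A ⊆ ℓ∞` has
`|A| < √q + 1` and `S` is a set of `q` affine points all of whose pairwise joining lines
meet `ℓ∞` within `A`, then `S` is contained in a line. -/
theorem redei_set_small_implies_collinear
    (P L : Type*) [Membership P L] [ProjectivePlane P L] [Fintype P] [Fintype L]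
    (q : ℕ) (hq : ProjectivePlane.order P L = q)
    (linf : L) (A : Set P) (hA : ∀ p ∈ A, p ∈ linf)
    (hAcard : (A.ncard : ℝ) < Real.sqrt q + 1)
    (S : Set P) (hScard : S.ncard = q) (hSoff : ∀ p ∈ S, p ∉ linf)
    (hdir : ∀ p ∈ S, ∀ p' ∈ S, p ≠ p' → ∀ m : L, p ∈ m → p' ∈ m →
        ∀ x : P, x ∈ m → x ∈ linf → x ∈ A) :
    ∃ m : L, ∀ p ∈ S, p ∈ m := by
  classical
  by_contra hcon
  push_neg at hcon
  -- `hcon : ∀ m : L, ∃ p ∈ S, p ∉ m`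
  have hq2 : 2 ≤ q := hq ▸ ProjectivePlane.one_lt_order P L
  set n := A.ncard with hn
  have hSfin : S.Finite := S.toFinite
  have hAfin : A.Finite := A.toFinite
  -- uniqueness of lines through two points and of intersection points
  have uline : ∀ {x y : P} {m m' : L}, x ≠ y → x ∈ m → y ∈ m → x ∈ m' → y ∈ m' → m = m' :=
    fun hxy h1 h2 h3 h4 => (Nondegenerate.eq_or_eq h1 h2 h3 h4).resolve_left hxy
  have upt : ∀ {x y : P} {m m' : L}, m ≠ m' → x ∈ m → x ∈ m' → y ∈ m → y ∈ m' → x = y :=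
    fun hmm h1 h2 h3 h4 => (Nondegenerate.eq_or_eq h1 h3 h2 h4).resolve_right hmm
  -- the direction of the line through two points of `S`
  have hdirex : ∀ p ∈ S, ∀ x ∈ S, p ≠ x →
      ∃ z, z ∈ A ∧ z ∈ linf ∧ ∀ m : L, p ∈ m → x ∈ m → z ∈ m := by
    intro p hp x hx hpx
    have hm := HasLines.mkLine_ax (L := L) hpx
    have hne : HasLines.mkLine hpx ≠ linf := fun h => hSoff p hp (h ▸ hm.1)
    obtain ⟨h1, h2⟩ := HasPoints.mkPoint_ax (P := P) hne
    refine ⟨_, hdir p hp x hx hpx _ hm.1 hm.2 _ h1 h2, h2, ?_⟩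
    intro m hpm hxm
    exact uline hpx hm.1 hm.2 hpm hxm ▸ h1
  -- every line containing a point of `A` meets `S` in at most `n - 1` points
  have LB : ∀ (ℓ : L) (d : P), d ∈ A → d ∈ ℓ →
      {x | x ∈ S ∧ x ∈ ℓ}.ncard ≤ n - 1 := by
    intro ℓ d hdA hdl
    obtain ⟨p, hpS, hpl⟩ := hcon ℓ
    have hex : ∀ x : P, ∃ z : P, x ∈ S ∧ x ∈ ℓ →
        z ∈ A ∧ z ∈ linf ∧ ∀ m : L, p ∈ m → x ∈ m → z ∈ m := by
      intro x
      by_cases hx : x ∈ S ∧ x ∈ ℓ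
      · have hpx : p ≠ x := fun h => hpl (h ▸ hx.2)
        obtain ⟨z, hz⟩ := hdirex p hpS x hx.1 hpx
        exact ⟨z, fun _ => hz⟩
      · exact ⟨p, fun h => absurd h hx⟩
    choose g hg using hex
    have hmap : ∀ x ∈ {x | x ∈ S ∧ x ∈ ℓ}, g x ∈ A \ {d} := by
      rintro x ⟨hxS, hxl⟩
      obtain ⟨hgA, hglinf, hgm⟩ := hg x ⟨hxS, hxl⟩
      refine ⟨hgA, ?_⟩
      simp only [Set.mem_singleton_iff]
      intro hgd
      have hpx : p ≠ x := fun h => hpl (h ▸ hxl)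
      have hm := HasLines.mkLine_ax (L := L) hpx
      have hdm : d ∈ HasLines.mkLine hpx := hgd ▸ hgm _ hm.1 hm.2
      have hxd : x ≠ d := fun h => hSoff x hxS (h ▸ hA d hdA)
      have : HasLines.mkLine hpx = ℓ := uline hxd hm.2 hdm hxl hdl
      exact hpl (this ▸ hm.1)
    have hinj : Set.InjOn g {x | x ∈ S ∧ x ∈ ℓ} := by
      rintro x ⟨hxS, hxl⟩ y ⟨hyS, hyl⟩ hxy
      obtain ⟨_, hglinf, hgm⟩ := hg x ⟨hxS, hxl⟩
      obtain ⟨_, hglinf', hgm'⟩ := hg y ⟨hyS, hyl⟩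
      have hpx : p ≠ x := fun h => hpl (h ▸ hxl)
      have hpy : p ≠ y := fun h => hpl (h ▸ hyl)
      have hmx := HasLines.mkLine_ax (L := L) hpx
      have hmy := HasLines.mkLine_ax (L := L) hpy
      have hz1 : g x ∈ HasLines.mkLine hpx := hgm _ hmx.1 hmx.2
      have hz2 : g x ∈ HasLines.mkLine hpy := hxy ▸ hgm' _ hmy.1 hmy.2
      have hpz : p ≠ g x := fun h => hSoff p hpS (h ▸ hglinf)
      have hlines : HasLines.mkLine hpx = HasLines.mkLine hpy :=
        uline hpz hmx.1 hz1 hmy.1 hz2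
      have hml : HasLines.mkLine hpx ≠ ℓ := fun h => hpl (h ▸ hmx.1)
      exact upt hml hmx.2 hxl (hlines ▸ hmy.2) hyl
    calc {x | x ∈ S ∧ x ∈ ℓ}.ncard ≤ (A \ {d}).ncard :=
          Set.ncard_le_ncard_of_injOn g hmap hinj hAfin.diff
      _ = n - 1 := Set.ncard_diff_singleton_of_mem hdA
  -- pick a base point `p₀` and a second point `p₁` of `S`
  have h1S : 1 < S.ncard := by omega
  obtain ⟨p₀, hp₀S, p₁, hp₁S, hp01⟩ := (Set.one_lt_ncard hSfin).mp h1S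
  -- the direction map from `p₀`
  have hex : ∀ x : P, ∃ z : P, x ∈ S ∧ p₀ ≠ x →
      z ∈ A ∧ z ∈ linf ∧ ∀ m : L, p₀ ∈ m → x ∈ m → z ∈ m := by
    intro x
    by_cases hx : x ∈ S ∧ p₀ ≠ x
    · obtain ⟨z, hz⟩ := hdirex p₀ hp₀S x hx.1 hx.2
      exact ⟨z, fun _ => hz⟩
    · exact ⟨p₀, fun h => absurd h hx⟩
  choose f hf using hex
  -- `n ≥ 2`
  have hn2 : 2 ≤ n := by
    have hm01 := HasLines.mkLine_ax (L := L) hp01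
    obtain ⟨p₂, hp₂S, hp₂m⟩ := hcon (HasLines.mkLine hp01)
    have hp02 : p₀ ≠ p₂ := fun h => hp₂m (h ▸ hm01.1)
    obtain ⟨hf1A, hf1l, hf1m⟩ := hf p₁ ⟨hp₁S, hp01⟩
    obtain ⟨hf2A, hf2l, hf2m⟩ := hf p₂ ⟨hp₂S, hp02⟩
    have hne : f p₁ ≠ f p₂ := by
      intro h
      have hm02 := HasLines.mkLine_ax (L := L) hp02
      have hz1 : f p₁ ∈ HasLines.mkLine hp01 := hf1m _ hm01.1 hm01.2
      have hz2 : f p₁ ∈ HasLines.mkLine hp02 := h ▸ hf2m _ hm02.1 hm02.2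
      have hpz : p₀ ≠ f p₁ := fun h' => hSoff p₀ hp₀S (h' ▸ hf1l)
      have : HasLines.mkLine hp01 = HasLines.mkLine hp02 :=
        uline hpz hm01.1 hz1 hm02.1 hz2
      exact hp₂m (this ▸ hm02.2)
    calc 2 = ({f p₁, f p₂} : Set P).ncard := (Set.ncard_pair hne).symm
      _ ≤ n := Set.ncard_le_ncard (by rintro z (rfl | rfl) <;> assumption) hAfin
  -- main count over the finset `S \ {p₀}`
  set Sf : Finset P := hSfin.toFinset with hSf
  set T : Finset P := Sf.erase p₀ with hT
  have hTmem : ∀ x, x ∈ T ↔ x ∈ S ∧ x ≠ p₀ := by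
    intro x
    simp only [hT, hSf, Finset.mem_erase, Set.Finite.mem_toFinset]
    tauto
  have hfiber : ∀ a ∈ T.image f, (T.filter fun x => f x = a).card ≤ n - 2 := by
    intro a ha
    obtain ⟨x₀, hx₀T, hx₀a⟩ := Finset.mem_image.mp ha
    obtain ⟨hx₀S, hx₀p⟩ := (hTmem x₀).mp hx₀T
    obtain ⟨haA, halinf, -⟩ := hf x₀ ⟨hx₀S, Ne.symm hx₀p⟩
    rw [hx₀a] at haA halinf
    have hp₀a : p₀ ≠ a := fun h => hSoff p₀ hp₀S (h ▸ halinf)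
    have hma := HasLines.mkLine_ax (L := L) hp₀a
    set ℓ : L := HasLines.mkLine hp₀a with hℓ
    -- every point of the fiber lies on ℓ
    have hsub : ∀ x ∈ T.filter (fun x => f x = a), x ∈ S ∧ x ∈ ℓ := by
      intro x hx
      obtain ⟨hxT, hfx⟩ := Finset.mem_filter.mp hx
      obtain ⟨hxS, hxp⟩ := (hTmem x).mp hxT
      obtain ⟨-, -, hgm⟩ := hf x ⟨hxS, Ne.symm hxp⟩
      have hmx := HasLines.mkLine_ax (L := L) (Ne.symm hxp : p₀ ≠ x)
      have hax : a ∈ HasLines.mkLine (Ne.symm hxp : p₀ ≠ x) := hfx ▸ hgm _ hmx.1 hmx.2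
      have : HasLines.mkLine (Ne.symm hxp : p₀ ≠ x) = ℓ :=
        uline hp₀a hmx.1 hax hma.1 hma.2
      exact ⟨hxS, this ▸ hmx.2⟩
    have hp₀notfib : p₀ ∉ T.filter (fun x => f x = a) := by
      intro h
      exact ((hTmem p₀).mp (Finset.mem_filter.mp h).1).2 rfl
    have hins : ((insert p₀ (T.filter fun x => f x = a) : Finset P) : Set P) ⊆
        {x | x ∈ S ∧ x ∈ ℓ} := by
      intro x hx
      simp only [Finset.coe_insert, Set.mem_insert_iff, Finset.mem_coe] at hx
      rcases hx with rfl | hx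
      · exact ⟨hp₀S, hma.1⟩
      · exact hsub x hx
    have hcard : (T.filter fun x => f x = a).card + 1 ≤ n - 1 := by
      have h1 : (T.filter fun x => f x = a).card + 1
          = ((insert p₀ (T.filter fun x => f x = a) : Finset P) : Set P).ncard := by
        rw [Set.ncard_coe_finset, Finset.card_insert_of_notMem hp₀notfib]
      rw [h1]
      exact le_trans (Set.ncard_le_ncard hins (Set.Finite.subset hSfin fun x hx => hx.1))
        (LB ℓ a haA hma.2)
    omega
  have himage : (T.image f).card ≤ n := by
    have : ((T.image f : Finset P) : Set P) ⊆ A := by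
      intro z hz
      simp only [Finset.coe_image, Set.mem_image, Finset.mem_coe] at hz
      obtain ⟨x, hxT, rfl⟩ := hz
      obtain ⟨hxS, hxp⟩ := (hTmem x).mp hxT
      exact (hf x ⟨hxS, Ne.symm hxp⟩).1
    have := Set.ncard_le_ncard this hAfin
    rwa [Set.ncard_coe_finset] at this
  have hTcard : T.card = q - 1 := by
    have hSfcard : Sf.card = q := by
      rw [hSf, ← Set.ncard_eq_toFinset_card S hSfin, hScard]
    rw [hT, Finset.card_erase_of_mem ((Set.Finite.mem_toFinset hSfin).mpr hp₀S), hSfcard]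
  have hmain : q - 1 ≤ (n - 2) * n := by
    calc q - 1 = T.card := hTcard.symm
      _ ≤ (n - 2) * (T.image f).card := Finset.card_le_mul_card_image T (n - 2) hfiber
      _ ≤ (n - 2) * n := Nat.mul_le_mul_left _ himage
  -- arithmetic contradiction
  obtain ⟨k, hk⟩ : ∃ k, n = k + 2 := ⟨n - 2, by omega⟩
  rw [hk] at hmain hAcard
  have hqle : q ≤ (k + 1) ^ 2 := by
    have h1 : q - 1 ≤ k * (k + 2) := by simpa using hmain
    have h3 : q ≤ k * (k + 2) + 1 := Nat.sub_le_iff_le_add.mp h1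
    calc q ≤ k * (k + 2) + 1 := h3
      _ = (k + 1) ^ 2 := by ring
  have hltq : ((k + 1) ^ 2 : ℕ) < q := by
    have h0 : (0 : ℝ) ≤ (k : ℝ) + 1 := by positivity
    have hlt' : (k : ℝ) + 1 < Real.sqrt q := by push_cast at hAcard; linarith
    have h2 : ((k : ℝ) + 1) * ((k : ℝ) + 1) < Real.sqrt q * Real.sqrt q :=
      mul_self_lt_mul_self h0 hlt'
    rw [Real.mul_self_sqrt (by positivity)] at h2
    have h3 : (((k + 1) ^ 2 : ℕ) : ℝ) < (q : ℝ) := by push_cast; nlinarith [h2]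
    exact_mod_cast h3
  omega
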